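/- For every natural number j ≥ 1 there exists δ_j > 0 such that for every f ∈ (-δ_j, 0), every complex root z of the polynomial p_f(t) = t^{2j+1} + t^{2j} - f t + f satisfies |z| < 1. -/

import Mathlib

private lemma bern (x : ℝ) (hx : 0 ≤ x) :
    ∀ n : ℕ, 2*(n:ℝ)*x ≤ 1 → (1+x)^n ≤ 1 + 2*(n:ℝ)*x := by
  intro n
  induction n with
  | zero => simp
  | succ n ih =>
    intro h
    have hn : 2*(n:ℝ)*x ≤ 1 := by push_cast at h; linarith
    have h1 := ih hn
    have k1 : (1+x)^n * (1+x) ≤ (1+2*(n:ℝ)*x)*(1+x) :=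
      mul_le_mul_of_nonneg_right h1 (by linarith)
    have k2 : (2*(n:ℝ)*x)*x ≤ 1*x := mul_le_mul_of_nonneg_right hn hx
    push_cast
    rw [pow_succ]
    nlinarith

set_option maxHeartbeats 1600000 in
theorem stmt_1 (j : ℕ) (hj : 1 ≤ j) :
    ∃ δ : ℝ, δ > 0 ∧ ∀ f : ℝ, f ∈ Set.Ioo (-δ) 0 →
      ∀ z : ℂ, z ^ (2 * j + 1) + z ^ (2 * j) - (f : ℂ) * z + (f : ℂ) = 0 →
        ‖z‖ < 1 := by
  have hj' : (1:ℝ) ≤ (j:ℝ) := by exact_mod_cast hj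
  refine ⟨1/(100*(j:ℝ)), by positivity, ?_⟩
  rintro f ⟨hf1, hf2⟩ z hz
  by_contra hcon
  push_neg at hcon
  obtain ⟨a, ha0, haf⟩ : ∃ a : ℝ, 0 < a ∧ f = -a := ⟨-f, by linarith, by ring⟩
  subst haf
  have haj : a * (j:ℝ) ≤ 1/100 := by
    have h1 : a < 1/(100*(j:ℝ)) := by linarith
    rw [lt_div_iff₀ (by positivity)] at h1
    nlinarith
  have ha100 : a ≤ 1/100 := by nlinarith
  have heq : z^(2*j) * (z+1) = (((-a : ℝ)):ℂ) * (z - 1) := by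
    push_cast
    push_cast at hz
    linear_combination hz
  have hAf : ‖((-a : ℝ):ℂ)‖ = a := by
    rw [Complex.norm_real, Real.norm_eq_abs, abs_of_neg (by linarith : -a < 0)]; ring
  have habs : (‖z‖)^(2*j) * ‖z+1‖ = a * ‖z-1‖ := by
    have h := congrArg (fun w : ℂ => ‖w‖) heq
    rwa [norm_mul, norm_mul, norm_pow, hAf] at h
  have hAz1 : 1 ≤ ‖z‖ := hcon
  have hzpow : 1 ≤ (‖z‖)^(2*j) := one_le_pow₀ hAz1
  have hA1 : ‖z-1‖ ≤ ‖z‖ + 1 := by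
    have := norm_sub_le z 1
    simpa using this
  have hA2 : ‖z‖ - 1 ≤ ‖z+1‖ := by
    have := norm_sub_le (z+1) 1
    simpa using this
  have hAz2 : ‖z‖ ≤ 2 := by
    have k1 : (‖z‖ - 1) * 1 ≤ (‖z‖ - 1) * (‖z‖)^(2*j) :=
      mul_le_mul_of_nonneg_left hzpow (by linarith)
    have k2 : (‖z‖ - 1) * (‖z‖)^(2*j)
        ≤ ‖z+1‖ * (‖z‖)^(2*j) :=
      mul_le_mul_of_nonneg_right hA2 (by positivity)
    have k3 : a * ‖z-1‖ ≤ a * (‖z‖ + 1) :=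
      mul_le_mul_of_nonneg_left hA1 ha0.le
    nlinarith [norm_nonneg (z-1)]
  have hwa : ‖z+1‖ ≤ 3*a := by
    have k1 : ‖z+1‖ * 1 ≤ ‖z+1‖ * (‖z‖)^(2*j) :=
      mul_le_mul_of_nonneg_left hzpow (norm_nonneg _)
    have k3 : a * ‖z-1‖ ≤ a * 3 :=
      mul_le_mul_of_nonneg_left (by linarith) ha0.le
    nlinarith
  -- geometric sum estimate
  have hnegpow : (-z)^(2*j) = z^(2*j) := Even.neg_pow (even_two_mul j) z
  have hgs := geom_sum_mul (-z) (2*j)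
  rw [hnegpow] at hgs
  have hAzw : ‖z‖ ≤ 1 + ‖z+1‖ := by linarith
  have hbpow : (1 + ‖z+1‖)^(2*j) ≤ 2 := by
    have hcond : 2*((2*j:ℕ):ℝ)*(‖z+1‖) ≤ 1 := by
      push_cast
      nlinarith [norm_nonneg (z+1)]
    have hb := bern (‖z+1‖) (norm_nonneg _) (2*j) hcond
    push_cast at hb
    nlinarith [norm_nonneg (z+1)]
  have hsum : ‖∑ i ∈ Finset.range (2*j), (-z)^i‖ ≤ 4*(j:ℝ) := by
    calc ‖∑ i ∈ Finset.range (2*j), (-z)^i‖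
        ≤ ∑ i ∈ Finset.range (2*j), ‖(-z)^i‖ :=
          norm_sum_le _ _
      _ ≤ ∑ _i ∈ Finset.range (2*j), (1 + ‖z+1‖)^(2*j) := by
          refine Finset.sum_le_sum fun i hi => ?_
          rw [norm_pow, norm_neg]
          calc (‖z‖)^i ≤ (1 + ‖z+1‖)^i :=
                pow_le_pow_left₀ (norm_nonneg _) hAzw i
            _ ≤ (1 + ‖z+1‖)^(2*j) :=
                pow_le_pow_right₀ (by linarith [norm_nonneg (z+1)])
                  (le_of_lt (Finset.mem_range.mp hi))
      _ = (2*(j:ℝ)) * (1 + ‖z+1‖)^(2*j) := by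
          rw [Finset.sum_const, Finset.card_range]; push_cast; ring
      _ ≤ 4*(j:ℝ) := by nlinarith [pow_nonneg (by linarith [norm_nonneg (z+1)] :
            (0:ℝ) ≤ 1 + ‖z+1‖) (2*j)]
  have hgeom : ‖z^(2*j) - 1‖ ≤ 4*(j:ℝ) * ‖z+1‖ := by
    rw [← hgs, norm_mul]
    have : ‖-z - 1‖ = ‖z+1‖ := by
      rw [show -z - 1 = -(z+1) by ring, norm_neg]
    rw [this]
    exact mul_le_mul_of_nonneg_right hsum (norm_nonneg _)
  have h12 : ‖z^(2*j) - 1‖ ≤ 12/100 := by nlinarith [norm_nonneg (z+1)]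
  have hBabs : ‖(z+1)*(z^(2*j)-1)‖ ≤ (36/100)*a := by
    rw [norm_mul]
    calc ‖z+1‖ * ‖z^(2*j)-1‖ ≤ (3*a) * (12/100) :=
          mul_le_mul hwa h12 (norm_nonneg _) (by linarith)
      _ = (36/100)*a := by ring
  -- rearranged equation and real parts
  have heq2 : z+1 = (((-a:ℝ)):ℂ)*(z-1) - (z+1)*(z^(2*j)-1) := by linear_combination heq
  have hre : z.re + 1 = (-a)*(z.re - 1) - ((z+1)*(z^(2*j)-1)).re := by
    have h := congrArg Complex.re heq2
    simpa [Complex.add_re, Complex.sub_re, Complex.one_re, Complex.re_ofReal_mul] using h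
  have hBre : ((z+1)*(z^(2*j)-1)).re ≤ (36/100)*a :=
    le_trans (le_abs_self _) ((Complex.abs_re_le_norm _).trans hBabs)
  have hwre : z.re + 1 ≤ 3*a := by
    have h := Complex.abs_re_le_norm (z+1)
    simp only [Complex.add_re, Complex.one_re] at h
    linarith [le_abs_self (z.re + 1), hwa]
  have hzre : (16/10)*a ≤ z.re + 1 := by
    have hf : (-a)*(z.re - 1) = a*(1 - z.re) := by ring
    rw [hf] at hre
    have k1 : a*(z.re+1) ≤ a*(3*a) := mul_le_mul_of_nonneg_left hwre ha0.le
    have k2 : (3*a)*a ≤ (3*a)*(1/100) :=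
      mul_le_mul_of_nonneg_left ha100 (by linarith)
    linarith
  -- final contradiction
  have hsq1 : 1 ≤ z.re^2 + z.im^2 := by
    have h : 1 ≤ (‖z‖)^2 := one_le_pow₀ hAz1
    rw [Complex.sq_norm, Complex.normSq_apply] at h
    linarith [h]
  have hsq2 : (z.re+1)^2 + z.im^2 ≤ 9*a^2 := by
    have h : (‖z+1‖)^2 ≤ (3*a)^2 := by
      have := mul_self_le_mul_self (norm_nonneg (z+1)) hwa
      nlinarith [this]
    rw [Complex.sq_norm, Complex.normSq_apply] at h
    simp only [Complex.add_re, Complex.add_im, Complex.one_re, Complex.one_im, add_zero] at h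
    nlinarith [h]
  have k3 : a*a ≤ a*(1/100) := mul_le_mul_of_nonneg_left ha100 ha0.le
  linarith [hsq1, hsq2, hzre, k3, ha0]
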